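/- Let U = {x ∈ ℝ^N : x_N ≤ γ(x')} be the subgraph of γ : ℝ^{N−1} → ℝ, where x = (x', x_N), and suppose γ(x') = α|x'| + o(|x'|) as |x'| → +∞ for some α ∈ ℝ. Then B(U) = {e ∈ S^{N-1} : e_N > α|e'|} and U(U) = {e ∈ S^{N-1} : e_N ≤ α|e'|}. -/

import Mathlib

open Filter Metric Topology

/-- The first `n` coordinates of a point of `ℝ^{n+1}`. -/
noncomputable def firstCoords (n : ℕ) (x : EuclideanSpace ℝ (Fin (n + 1))) :
    EuclideanSpace ℝ (Fin n) :=
  WithLp.toLp 2 (fun i : Fin n => x i.castSucc)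

/-- The subgraph `U = {x = (x', x_N) : x_N ≤ γ(x')}` of `γ : ℝ^{N-1} → ℝ`. -/
def subgraphSet (n : ℕ) (γ : EuclideanSpace ℝ (Fin n) → ℝ) :
    Set (EuclideanSpace ℝ (Fin (n + 1))) :=
  {x | x (Fin.last n) ≤ γ (firstCoords n x)}

lemma norm_sq_decomp (n : ℕ) (x : EuclideanSpace ℝ (Fin (n+1))) :
    ‖x‖^2 = ‖firstCoords n x‖^2 + (x (Fin.last n))^2 := by
  rw [EuclideanSpace.norm_eq, EuclideanSpace.norm_eq,
    Real.sq_sqrt (by positivity), Real.sq_sqrt (by positivity),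
    Fin.sum_univ_castSucc]
  simp [firstCoords, sq_abs]

lemma firstCoords_sub (n : ℕ) (x y : EuclideanSpace ℝ (Fin (n+1))) :
    firstCoords n (x - y) = firstCoords n x - firstCoords n y := by
  ext i; simp [firstCoords]

lemma firstCoords_smul (n : ℕ) (c : ℝ) (x : EuclideanSpace ℝ (Fin (n+1))) :
    firstCoords n (c • x) = c • firstCoords n x := by
  ext i; simp [firstCoords]

lemma abs_last_le (n : ℕ) (x : EuclideanSpace ℝ (Fin (n+1))) :
    |x (Fin.last n)| ≤ ‖x‖ := by
  have h := norm_sq_decomp n x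
  nlinarith [norm_nonneg x, norm_nonneg (firstCoords n x), sq_abs (x (Fin.last n)),
    abs_nonneg (x (Fin.last n))]

lemma norm_first_le (n : ℕ) (x : EuclideanSpace ℝ (Fin (n+1))) :
    ‖firstCoords n x‖ ≤ ‖x‖ := by
  have h := norm_sq_decomp n x
  nlinarith [norm_nonneg x, norm_nonneg (firstCoords n x), sq_nonneg (x (Fin.last n))]

lemma last_dist_le (n : ℕ) (x y : EuclideanSpace ℝ (Fin (n+1))) :
    x (Fin.last n) - y (Fin.last n) ≤ dist x y := by
  have h := abs_last_le n (x - y)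
  have hxy : (x - y) (Fin.last n) = x (Fin.last n) - y (Fin.last n) := by simp
  rw [hxy] at h
  calc x (Fin.last n) - y (Fin.last n) ≤ |x (Fin.last n) - y (Fin.last n)| := le_abs_self _
    _ ≤ ‖x - y‖ := h
    _ = dist x y := (dist_eq_norm x y).symm

lemma first_dist_le (n : ℕ) (x y : EuclideanSpace ℝ (Fin (n+1))) :
    ‖firstCoords n x - firstCoords n y‖ ≤ dist x y := by
  have h := norm_first_le n (x - y)
  rw [firstCoords_sub] at h
  rw [dist_eq_norm]; exact h

noncomputable def mkpt (n : ℕ) (a : EuclideanSpace ℝ (Fin n)) (t : ℝ) :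
    EuclideanSpace ℝ (Fin (n+1)) := WithLp.toLp 2 (Fin.snoc (α := fun _ => ℝ) a.ofLp t)

lemma firstCoords_mkpt (n : ℕ) (a : EuclideanSpace ℝ (Fin n)) (t : ℝ) :
    firstCoords n (mkpt n a t) = a := by
  ext i; simp [firstCoords, mkpt]

lemma mkpt_last (n : ℕ) (a : EuclideanSpace ℝ (Fin n)) (t : ℝ) :
    mkpt n a t (Fin.last n) = t := by simp [mkpt]

lemma norm_eq_abs_last (n : ℕ) (x : EuclideanSpace ℝ (Fin (n+1)))
    (h : firstCoords n x = 0) : ‖x‖ = |x (Fin.last n)| := by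
  have hd := norm_sq_decomp n x
  rw [h] at hd; simp at hd
  have : ‖x‖ = Real.sqrt (‖x‖^2) := by
    rw [Real.sqrt_sq (norm_nonneg x)]
  rw [this, hd, Real.sqrt_sq_eq_abs]

lemma subgraph_nonempty (n : ℕ) (γ : EuclideanSpace ℝ (Fin n) → ℝ) :
    (subgraphSet n γ).Nonempty := by
  refine ⟨mkpt n 0 (γ 0), ?_⟩
  show (mkpt n 0 (γ 0)) (Fin.last n) ≤ γ (firstCoords n (mkpt n 0 (γ 0)))
  rw [mkpt_last, firstCoords_mkpt]

lemma tendsto_of_below (n : ℕ) (γ : EuclideanSpace ℝ (Fin n) → ℝ) (α : ℝ)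
    (hasymp : ∀ ε : ℝ, 0 < ε → ∃ R : ℝ, ∀ x' : EuclideanSpace ℝ (Fin n),
      R ≤ ‖x'‖ → |γ x' - α * ‖x'‖| ≤ ε * ‖x'‖)
    (ξ : EuclideanSpace ℝ (Fin (n + 1))) (hξ : ‖ξ‖ = 1)
    (h : ξ (Fin.last n) ≤ α * ‖firstCoords n ξ‖) :
    Filter.Tendsto (fun τ : ℝ => Metric.infDist (τ • ξ) (subgraphSet n γ) / τ)
      Filter.atTop (nhds 0) := by
  set ξ' := firstCoords n ξ with hxi'
  set ξN := ξ (Fin.last n) with hxiN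
  rw [Metric.tendsto_nhds]
  intro ε hε
  have core : ∀ᶠ τ : ℝ in atTop, τ * ξN - γ (τ • ξ') ≤ (ε/2) * τ := by
    by_cases hz : ξ' = 0
    · have hN0 : ξN ≤ 0 := by
        have := h; rw [hz] at this; simpa using this
      filter_upwards [eventually_ge_atTop (max 0 (2 * |γ 0| / ε))] with τ hτ
      have hτ0 : (0:ℝ) ≤ τ := le_trans (le_max_left _ _) hτ
      have hτ1 : 2 * |γ 0| / ε ≤ τ := le_trans (le_max_right _ _) hτ
      have h1 : 2 * |γ 0| ≤ ε * τ := by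
        rw [div_le_iff₀ hε] at hτ1; linarith [hτ1]
      have h2 : τ * ξN ≤ 0 := mul_nonpos_of_nonneg_of_nonpos hτ0 hN0
      have h3 : -γ 0 ≤ |γ 0| := neg_le_abs _
      rw [hz, smul_zero]
      nlinarith [abs_nonneg (γ 0)]
    · have hn0 : 0 < ‖ξ'‖ := norm_pos_iff.mpr hz
      obtain ⟨R, hR⟩ := hasymp (ε/2) (by linarith)
      filter_upwards [eventually_ge_atTop (max 0 (R / ‖ξ'‖))] with τ hτ
      have hτ0 : (0:ℝ) ≤ τ := le_trans (le_max_left _ _) hτ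
      have hτ1 : R / ‖ξ'‖ ≤ τ := le_trans (le_max_right _ _) hτ
      have hRτ : R ≤ τ * ‖ξ'‖ := by
        rw [div_le_iff₀ hn0] at hτ1; linarith
      have hns : ‖τ • ξ'‖ = τ * ‖ξ'‖ := by
        rw [norm_smul, Real.norm_eq_abs, abs_of_nonneg hτ0]
      have hgg := hR (τ • ξ') (by rw [hns]; exact hRτ)
      rw [hns] at hgg
      have hle1 : ‖ξ'‖ ≤ 1 := by
        have := norm_first_le n ξ; rw [hξ] at this; exact this
      have hup : τ * ξN ≤ τ * (α * ‖ξ'‖) := mul_le_mul_of_nonneg_left h hτ0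
      have habs := abs_le.mp hgg
      nlinarith [habs.1, mul_le_mul_of_nonneg_left hle1
        (mul_nonneg (le_of_lt (by linarith : (0:ℝ) < ε/2)) hτ0)]
  filter_upwards [core, eventually_gt_atTop 0] with τ hcore hτ
  set y := mkpt n (τ • ξ') (min (τ * ξN) (γ (τ • ξ'))) with hy
  have hyU : y ∈ subgraphSet n γ := by
    show y (Fin.last n) ≤ γ (firstCoords n y)
    rw [hy, mkpt_last, firstCoords_mkpt]
    exact min_le_right _ _
  have hfc0 : firstCoords n (τ • ξ - y) = 0 := by
    rw [firstCoords_sub, firstCoords_smul, hy, firstCoords_mkpt, ← hxi', sub_self]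
  have hdist : dist (τ • ξ) y = |τ * ξN - min (τ * ξN) (γ (τ • ξ'))| := by
    rw [dist_eq_norm, norm_eq_abs_last n _ hfc0]
    congr 1
    have h1 : (τ • ξ - y) (Fin.last n) = (τ • ξ) (Fin.last n) - y (Fin.last n) := by simp
    have h2 : (τ • ξ) (Fin.last n) = τ * ξN := by simp [hxiN]
    rw [h1, h2, hy, mkpt_last]
  have hval : |τ * ξN - min (τ * ξN) (γ (τ • ξ'))| ≤ (ε/2) * τ := by
    rw [abs_of_nonneg (by simp [min_le_left])]
    rcases le_total (τ * ξN) (γ (τ • ξ')) with hc | hc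
    · rw [min_eq_left hc]; simp; positivity
    · rw [min_eq_right hc]; exact hcore
  have hinf : Metric.infDist (τ • ξ) (subgraphSet n γ) ≤ (ε/2) * τ :=
    le_trans (Metric.infDist_le_dist_of_mem hyU) (by rw [hdist]; exact hval)
  rw [Real.dist_eq, sub_zero, abs_of_nonneg (div_nonneg Metric.infDist_nonneg hτ.le)]
  rw [div_lt_iff₀ hτ]
  nlinarith [Metric.infDist_nonneg (x := τ • ξ) (s := subgraphSet n γ)]

lemma eventually_lower (n : ℕ) (γ : EuclideanSpace ℝ (Fin n) → ℝ) (α : ℝ)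
    (hloc : ∀ r : ℝ, ∃ M : ℝ, ∀ x' : EuclideanSpace ℝ (Fin n), ‖x'‖ ≤ r → |γ x'| ≤ M)
    (hasymp : ∀ ε : ℝ, 0 < ε → ∃ R : ℝ, ∀ x' : EuclideanSpace ℝ (Fin n),
      R ≤ ‖x'‖ → |γ x' - α * ‖x'‖| ≤ ε * ‖x'‖)
    (ξ : EuclideanSpace ℝ (Fin (n + 1))) (hξ : ‖ξ‖ = 1)
    (h : α * ‖firstCoords n ξ‖ < ξ (Fin.last n)) :
    ∃ c : ℝ, 0 < c ∧ ∀ᶠ τ : ℝ in atTop,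
      c ≤ Metric.infDist (τ • ξ) (subgraphSet n γ) / τ := by
  set ξ' := firstCoords n ξ with hxi'
  set ξN := ξ (Fin.last n) with hxiN
  set s := ξN - α * ‖ξ'‖ with hs
  clear_value s
  have hs0 : 0 < s := by rw [hs]; linarith
  obtain ⟨R0, hR0⟩ := hasymp (s/2) (by linarith)
  set R := max R0 0 with hRdef
  obtain ⟨M, hM⟩ := hloc R
  set β := α + s/2 with hβ
  set C := |M| + |β| * R with hC
  have hR0' : (0:ℝ) ≤ R := le_max_right _ _
  clear_value β C R
  have hC0 : 0 ≤ C := by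
    rw [hC]; exact add_nonneg (abs_nonneg M) (mul_nonneg (abs_nonneg β) hR0')
  have hβ1 : (0:ℝ) < 1 + |β| := by positivity
  have hγ : ∀ y' : EuclideanSpace ℝ (Fin n), γ y' ≤ C + β * ‖y'‖ := by
    intro y'
    rcases le_total ‖y'‖ R with hc | hc
    · have h1 := hM y' hc
      have h2 : -(|β| * ‖y'‖) ≤ β * ‖y'‖ := by
        have := neg_abs_le β
        nlinarith [norm_nonneg y']
      have h3 : |β| * ‖y'‖ ≤ |β| * R := mul_le_mul_of_nonneg_left hc (abs_nonneg β)
      have h4 : γ y' ≤ |γ y'| := le_abs_self _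
      have h5 : M ≤ |M| := le_abs_self _
      rw [hC]; linarith
    · have hcc : R0 ≤ ‖y'‖ := le_trans (by rw [hRdef]; exact le_max_left _ _) hc
      have h1 := (abs_le.mp (hR0 y' hcc)).2
      rw [hC, hβ]; nlinarith [abs_nonneg M, mul_nonneg (abs_nonneg (α + s/2)) hR0']
  have hhalf : s/2 ≤ ξN - β * ‖ξ'‖ := by
    have hle1 : ‖ξ'‖ ≤ 1 := by
      have := norm_first_le n ξ; rw [hξ] at this; exact this
    have : s/2 * ‖ξ'‖ ≤ s/2 * 1 := by nlinarith
    rw [hβ]; nlinarith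
  have hmain : ∀ τ : ℝ, 0 ≤ τ → ∀ y ∈ subgraphSet n γ,
      (s/2) * τ - C ≤ (1 + |β|) * dist (τ • ξ) y := by
    intro τ hτ y hyU
    set d' := ‖firstCoords n (τ • ξ) - firstCoords n y‖ with hd'
    have hd1 : d' ≤ dist (τ • ξ) y := first_dist_le n _ _
    have hd2 : (τ • ξ) (Fin.last n) - y (Fin.last n) ≤ dist (τ • ξ) y := last_dist_le n _ _
    have hsl : (τ • ξ) (Fin.last n) = τ * ξN := by simp [hxiN]
    rw [hsl] at hd2
    have hfc : firstCoords n (τ • ξ) = τ • ξ' := firstCoords_smul n τ ξ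
    have hnormfc : ‖firstCoords n (τ • ξ)‖ = τ * ‖ξ'‖ := by
      rw [hfc, norm_smul, Real.norm_eq_abs, abs_of_nonneg hτ]
    have hyle : y (Fin.last n) ≤ γ (firstCoords n y) := hyU
    have h1 : γ (firstCoords n y) ≤ C + β * ‖firstCoords n y‖ := hγ _
    have h2 : β * ‖firstCoords n y‖ ≤ β * (τ * ‖ξ'‖) + |β| * d' := by
      have key : |‖firstCoords n y‖ - ‖firstCoords n (τ • ξ)‖| ≤ d' := by
        rw [hd', norm_sub_rev]
        exact abs_norm_sub_norm_le _ _
      rw [hnormfc] at key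
      have hbt : β * (‖firstCoords n y‖ - τ * ‖ξ'‖) ≤ |β| * d' := by
        calc β * (‖firstCoords n y‖ - τ * ‖ξ'‖) ≤ |β * (‖firstCoords n y‖ - τ * ‖ξ'‖)| :=
              le_abs_self _
          _ = |β| * |‖firstCoords n y‖ - τ * ‖ξ'‖| := abs_mul _ _
          _ ≤ |β| * d' := mul_le_mul_of_nonneg_left key (abs_nonneg β)
      have expand : β * (‖firstCoords n y‖ - τ * ‖ξ'‖)
          = β * ‖firstCoords n y‖ - β * (τ * ‖ξ'‖) := by ring
      linarith
    have hF : τ * (s/2) ≤ τ * (ξN - β * ‖ξ'‖) := mul_le_mul_of_nonneg_left hhalf hτ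
    have hE : |β| * d' ≤ |β| * dist (τ • ξ) y := mul_le_mul_of_nonneg_left hd1 (abs_nonneg β)
    have expand2 : (1 + |β|) * dist (τ • ξ) y
        = dist (τ • ξ) y + |β| * dist (τ • ξ) y := by ring
    have expand3 : τ * (ξN - β * ‖ξ'‖) = τ * ξN - β * (τ * ‖ξ'‖) := by ring
    linarith
  refine ⟨s / (4 * (1 + |β|)), by positivity, ?_⟩
  filter_upwards [eventually_gt_atTop 0, eventually_ge_atTop (4 * C / s)] with τ hτ0 hτ1
  have hCs : C ≤ s/4 * τ := by
    rw [div_le_iff₀ (by linarith : (0:ℝ) < s)] at hτ1; linarith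
  have hinf : ((s/2) * τ - C) / (1 + |β|) ≤ Metric.infDist (τ • ξ) (subgraphSet n γ) := by
    by_contra hcon
    push_neg at hcon
    obtain ⟨y, hy, hd⟩ := (Metric.infDist_lt_iff (subgraph_nonempty n γ)).mp hcon
    rw [lt_div_iff₀ hβ1] at hd
    have hdd := hmain τ hτ0.le y hy
    nlinarith
  rw [le_div_iff₀ hτ0]
  calc s / (4 * (1 + |β|)) * τ = (s/4 * τ) / (1 + |β|) := by
        field_simp
    _ ≤ ((s/2) * τ - C) / (1 + |β|) := by gcongr ?_ / _; linarith
    _ ≤ _ := hinf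

/-- if `γ` is locally bounded and `γ(x') = α|x'| + o(|x'|)` as
`|x'| → +∞`, then `B(U) = {e ∈ S^{N-1} : e_N > α|e'|}` and
`U(U) = {e ∈ S^{N-1} : e_N ≤ α|e'|}` for the subgraph `U` of `γ`. -/
theorem subgraph_linear_growth_directions (n : ℕ) (hn : 1 ≤ n)
    (γ : EuclideanSpace ℝ (Fin n) → ℝ) (α : ℝ)
    (hloc : ∀ r : ℝ, ∃ M : ℝ, ∀ x' : EuclideanSpace ℝ (Fin n), ‖x'‖ ≤ r → |γ x'| ≤ M)
    (hasymp : ∀ ε : ℝ, 0 < ε → ∃ R : ℝ, ∀ x' : EuclideanSpace ℝ (Fin n),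
      R ≤ ‖x'‖ → |γ x' - α * ‖x'‖| ≤ ε * ‖x'‖) :
    ∀ ξ : EuclideanSpace ℝ (Fin (n + 1)), ‖ξ‖ = 1 →
      ((0 < Filter.liminf
          (fun τ : ℝ => Metric.infDist (τ • ξ) (subgraphSet n γ) / τ) Filter.atTop)
        ↔ α * ‖firstCoords n ξ‖ < ξ (Fin.last n)) ∧
      ((Filter.Tendsto
          (fun τ : ℝ => Metric.infDist (τ • ξ) (subgraphSet n γ) / τ)
          Filter.atTop (nhds 0))
        ↔ ξ (Fin.last n) ≤ α * ‖firstCoords n ξ‖) := by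
  intro ξ hξ
  obtain ⟨pt, hpt⟩ := subgraph_nonempty n γ
  have hub : ∀ᶠ τ : ℝ in atTop,
      Metric.infDist (τ • ξ) (subgraphSet n γ) / τ ≤ 1 + ‖pt‖ := by
    filter_upwards [eventually_ge_atTop 1] with τ hτ
    have hτ0 : (0:ℝ) < τ := lt_of_lt_of_le one_pos hτ
    rw [div_le_iff₀ hτ0]
    have h1 : Metric.infDist (τ • ξ) (subgraphSet n γ) ≤ dist (τ • ξ) pt :=
      Metric.infDist_le_dist_of_mem hpt
    have h2 : dist (τ • ξ) pt ≤ ‖τ • ξ‖ + ‖pt‖ := dist_le_norm_add_norm _ _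
    have h3 : ‖τ • ξ‖ = τ := by
      rw [norm_smul, hξ, Real.norm_eq_abs, abs_of_pos hτ0]; ring
    nlinarith [norm_nonneg pt]
  have hcob : IsCoboundedUnder (· ≥ ·) atTop
      (fun τ : ℝ => Metric.infDist (τ • ξ) (subgraphSet n γ) / τ) :=
    isCoboundedUnder_ge_of_eventually_le atTop hub
  have hQnP : Filter.Tendsto
      (fun τ : ℝ => Metric.infDist (τ • ξ) (subgraphSet n γ) / τ) atTop (nhds 0) →
      ¬ (0 < Filter.liminf
        (fun τ : ℝ => Metric.infDist (τ • ξ) (subgraphSet n γ) / τ) atTop) := by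
    intro hQ hP
    rw [hQ.liminf_eq] at hP
    exact lt_irrefl 0 hP
  constructor
  · constructor
    · intro hP
      by_contra hcon
      push_neg at hcon
      exact hQnP (tendsto_of_below n γ α hasymp ξ hξ hcon) hP
    · intro hlt
      obtain ⟨c, hc, hev⟩ := eventually_lower n γ α hloc hasymp ξ hξ hlt
      have := Filter.le_liminf_of_le hcob hev
      linarith
  · constructor
    · intro hQ
      by_contra hcon
      push_neg at hcon
      obtain ⟨c, hc, hev⟩ := eventually_lower n γ α hloc hasymp ξ hξ hcon
      have := Filter.le_liminf_of_le hcob hev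
      exact hQnP hQ (lt_of_lt_of_le hc this)
    · exact tendsto_of_below n γ α hasymp ξ hξ
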